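/- Let f(s) = p(s)/q(s) be a rational function with real polynomial coefficients where deg p ≤ deg q = n, q is Hurwitz stable, and Re[f(jω)] > 0 for all real ω. Then p is Hurwitz stable and deg p ∈ {n-1, n}. -/

import Mathlib

open Polynomial Complex

noncomputable def evalI (p : Polynomial ℝ) (ω : ℝ) : ℂ :=
  Polynomial.aeval ((ω : ℂ) * Complex.I) p

def HurwitzStable (p : Polynomial ℝ) : Prop :=
  ∀ z : ℂ, Polynomial.aeval z p = 0 → z.re < 0

def SPR (p q : Polynomial ℝ) : Prop :=
  p.degree = q.degree ∧ HurwitzStable q ∧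
    ∀ ω : ℝ, 0 < (evalI p ω / evalI q ω).re

open Filter Set Metric Asymptotics Function Topology

lemma norm_eval_le_aux (P : ℂ[X]) (d : ℕ) (hd : P.natDegree ≤ d) :
    ∃ C : ℝ, 0 ≤ C ∧ ∀ z : ℂ, 1 ≤ ‖z‖ → ‖P.eval z‖ ≤ C * ‖z‖ ^ d := by
  refine ⟨∑ i ∈ Finset.range (P.natDegree + 1), ‖P.coeff i‖,
    Finset.sum_nonneg fun _ _ => norm_nonneg _, fun z hz => ?_⟩
  rw [Polynomial.eval_eq_sum_range]
  calc ‖∑ i ∈ Finset.range (P.natDegree + 1), P.coeff i * z ^ i‖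
      ≤ ∑ i ∈ Finset.range (P.natDegree + 1), ‖P.coeff i * z ^ i‖ := norm_sum_le _ _
    _ ≤ ∑ i ∈ Finset.range (P.natDegree + 1), ‖P.coeff i‖ * ‖z‖ ^ d := by
        refine Finset.sum_le_sum fun i hi => ?_
        rw [norm_mul, norm_pow]
        exact mul_le_mul_of_nonneg_left
          (pow_le_pow_right₀ hz ((Nat.lt_succ_iff.mp (Finset.mem_range.mp hi)).trans hd))
          (norm_nonneg _)
    _ = (∑ i ∈ Finset.range (P.natDegree + 1), ‖P.coeff i‖) * ‖z‖ ^ d := by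
        rw [Finset.sum_mul]


lemma norm_eval_ge_aux (Q : ℂ[X]) (hn : 1 ≤ Q.natDegree) :
    ∃ r : ℝ, 1 ≤ r ∧ ∀ z : ℂ, r ≤ ‖z‖ →
      (‖Q.leadingCoeff‖ / 2) * ‖z‖ ^ Q.natDegree ≤ ‖Q.eval z‖ := by
  obtain ⟨C₂, hC₂0, hC₂⟩ := norm_eval_le_aux Q.eraseLead (Q.natDegree - 1)
    (Q.eraseLead_natDegree_le)
  have hQ0 : Q ≠ 0 := fun h => by simp [h] at hn
  have hb : (0:ℝ) < ‖Q.leadingCoeff‖ := norm_pos_iff.mpr (leadingCoeff_ne_zero.mpr hQ0)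
  refine ⟨max 1 (2 * (C₂ + 1) / ‖Q.leadingCoeff‖), le_max_left _ _, fun z hz => ?_⟩
  have hz1 : 1 ≤ ‖z‖ := le_trans (le_max_left _ _) hz
  have hz2 : 2 * (C₂ + 1) / ‖Q.leadingCoeff‖ ≤ ‖z‖ := le_trans (le_max_right _ _) hz
  have hsplit : Q.eval z = Q.eraseLead.eval z + Q.leadingCoeff * z ^ Q.natDegree := by
    conv_lhs => rw [← Q.eraseLead_add_C_mul_X_pow]
    simp only [eval_add, eval_mul, eval_C, eval_pow, eval_X]
  have h1 : ‖Q.eraseLead.eval z‖ ≤ C₂ * ‖z‖ ^ (Q.natDegree - 1) := hC₂ z hz1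
  have h2 : ‖Q.leadingCoeff * z ^ Q.natDegree‖ ≤ ‖Q.eval z‖ + ‖Q.eraseLead.eval z‖ := by
    rw [hsplit]
    calc ‖Q.leadingCoeff * z ^ Q.natDegree‖
        = ‖(Q.eraseLead.eval z + Q.leadingCoeff * z ^ Q.natDegree) - Q.eraseLead.eval z‖ := by
          ring_nf
      _ ≤ ‖Q.eraseLead.eval z + Q.leadingCoeff * z ^ Q.natDegree‖ + ‖Q.eraseLead.eval z‖ :=
          norm_sub_le _ _
  have hpow : ‖z‖ ^ Q.natDegree = ‖z‖ * ‖z‖ ^ (Q.natDegree - 1) := by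
    conv_lhs => rw [show Q.natDegree = (Q.natDegree - 1) + 1 by omega]
    rw [pow_succ]
    ring
  have h3 : ‖Q.leadingCoeff * z ^ Q.natDegree‖ = ‖Q.leadingCoeff‖ * ‖z‖ ^ Q.natDegree := by
    rw [norm_mul, norm_pow]
  have hbz : C₂ + 1 ≤ (‖Q.leadingCoeff‖ / 2) * ‖z‖ := by
    rw [div_le_iff₀ hb] at hz2
    nlinarith
  have hp1 : (0:ℝ) ≤ ‖z‖ ^ (Q.natDegree - 1) := by positivity
  nlinarith [pow_le_pow_right₀ hz1 (Nat.sub_le Q.natDegree 1)]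

lemma tendsto_eval_div_aux (D Q : ℂ[X]) (hdeg : D.natDegree < Q.natDegree)
    (z : ℝ → ℂ) (hz : Tendsto (fun t => ‖z t‖) atTop atTop) :
    Tendsto (fun t => D.eval (z t) / Q.eval (z t)) atTop (𝓝 0) := by
  have hn : 1 ≤ Q.natDegree := Nat.one_le_iff_ne_zero.mpr (by omega)
  have hQ0 : Q ≠ 0 := fun h => by simp [h] at hn
  have hb : (0:ℝ) < ‖Q.leadingCoeff‖ := norm_pos_iff.mpr (leadingCoeff_ne_zero.mpr hQ0)
  obtain ⟨C₁, hC₁0, hC₁⟩ := norm_eval_le_aux D (Q.natDegree - 1) (by omega)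
  obtain ⟨r, hr1, hr⟩ := norm_eval_ge_aux Q hn
  have hlim : Tendsto (fun t => C₁ / ((‖Q.leadingCoeff‖ / 2) * ‖z t‖)) atTop (𝓝 0) :=
    tendsto_const_nhds.div_atTop (hz.const_mul_atTop (by linarith))
  refine squeeze_zero_norm' ?_ hlim
  filter_upwards [hz.eventually_ge_atTop r] with t ht
  have hz1 : 1 ≤ ‖z t‖ := le_trans hr1 ht
  have hQlb := hr (z t) ht
  have hnum := hC₁ (z t) hz1
  have hpow : ‖z t‖ ^ Q.natDegree = ‖z t‖ * ‖z t‖ ^ (Q.natDegree - 1) := by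
    conv_lhs => rw [show Q.natDegree = (Q.natDegree - 1) + 1 by omega]
    rw [pow_succ]; ring
  have hdpos : (0:ℝ) < (‖Q.leadingCoeff‖ / 2) * ‖z t‖ ^ Q.natDegree := by positivity
  rw [norm_div]
  calc ‖D.eval (z t)‖ / ‖Q.eval (z t)‖
      ≤ (C₁ * ‖z t‖ ^ (Q.natDegree - 1)) / ((‖Q.leadingCoeff‖ / 2) * ‖z t‖ ^ Q.natDegree) :=
        div_le_div₀ (by positivity) hnum hdpos hQlb
    _ = C₁ / ((‖Q.leadingCoeff‖ / 2) * ‖z t‖) := by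
        rw [hpow]
        rw [show (‖Q.leadingCoeff‖ / 2) * (‖z t‖ * ‖z t‖ ^ (Q.natDegree - 1))
          = ((‖Q.leadingCoeff‖ / 2) * ‖z t‖) * ‖z t‖ ^ (Q.natDegree - 1) by ring]
        exact mul_div_mul_right _ _ (by positivity)


lemma hurwitz_sign (r : Polynomial ℝ) (h0 : r ≠ 0) (hr : HurwitzStable r) :
    0 < r.eval 0 * r.leadingCoeff := by
  have hroot : ∀ x : ℝ, 0 ≤ x → r.eval x ≠ 0 := by
    intro x hx hev
    have h1 : (aeval (x:ℂ)) r = 0 := by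
      rw [show ((x:ℂ)) = algebraMap ℝ ℂ x from rfl,
        aeval_algebraMap_apply_eq_algebraMap_eval, hev, map_zero]
    have := hr _ h1
    rw [ofReal_re] at this
    linarith
  have hlead : r.leadingCoeff ≠ 0 := leadingCoeff_ne_zero.mpr h0
  rcases Nat.eq_zero_or_pos r.natDegree with hd | hd
  · have hc := Polynomial.eq_C_of_natDegree_eq_zero hd
    rw [hc, eval_C, leadingCoeff_C]
    have : r.coeff 0 ≠ 0 := fun h => h0 (by rw [hc, h, map_zero])
    exact mul_self_pos.mpr this
  have key : ∀ s : Polynomial ℝ, 0 < s.natDegree → 0 < s.leadingCoeff →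
      (∀ x : ℝ, 0 ≤ x → s.eval x ≠ 0) → 0 < s.eval 0 := by
    intro s hsd hsl hroots
    by_contra h
    push_neg at h
    have h0' : s.eval 0 < 0 := lt_of_le_of_ne h (hroots 0 le_rfl)
    have htop := s.tendsto_atTop_of_leadingCoeff_nonneg
      (natDegree_pos_iff_degree_pos.mp hsd) hsl.le
    obtain ⟨b, hb1, hb0⟩ := ((htop.eventually_ge_atTop 1).and (eventually_ge_atTop 0)).exists
    have hIVT := intermediate_value_Ioo hb0 s.continuousOn
    have h0mem : (0:ℝ) ∈ Ioo (s.eval 0) (s.eval b) := ⟨h0', by linarith⟩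
    obtain ⟨x, hx, hxe⟩ := hIVT h0mem
    exact hroots x hx.1.le hxe
  rcases hlead.lt_or_gt with hl | hl
  · have hneg := key (-r) (by rwa [natDegree_neg]) (by rw [leadingCoeff_neg]; linarith)
      (fun x hx h => hroot x hx (by simpa using h))
    rw [eval_neg] at hneg
    nlinarith
  · have hpos := key r hd hl hroot
    exact mul_pos hpos hl

set_option maxHeartbeats 1000000 in
theorem spr_numerator_stable (n : ℕ) (p q : Polynomial ℝ)
    (hq : HurwitzStable q) (hqdeg : q.natDegree = n)
    (hp0 : p ≠ 0) (hdeg : p.degree ≤ q.degree)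
    (hpos : ∀ ω : ℝ, 0 < (evalI p ω / evalI q ω).re) :
    HurwitzStable p ∧ (p.natDegree = n - 1 ∨ p.natDegree = n) := by
  classical
  have hq0 : q ≠ 0 := by
    rintro rfl
    have := hpos 0
    simp [evalI] at this
  have hmapinj : Function.Injective (algebraMap ℝ ℂ) := (algebraMap ℝ ℂ).injective
  set P := p.map (algebraMap ℝ ℂ) with hPdef
  set Q := q.map (algebraMap ℝ ℂ) with hQdef
  have hP0 : P ≠ 0 := (Polynomial.map_ne_zero_iff hmapinj).mpr hp0
  have hQ0 : Q ≠ 0 := (Polynomial.map_ne_zero_iff hmapinj).mpr hq0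
  have haev : ∀ (r : Polynomial ℝ) (z : ℂ),
      aeval z r = (r.map (algebraMap ℝ ℂ)).eval z := fun r z => by
    rw [aeval_def, Polynomial.eval_map]
  have hQne : ∀ z : ℂ, 0 ≤ z.re → Q.eval z ≠ 0 := by
    intro z hz h
    have := hq z (by rw [haev]; exact h)
    linarith
  set f : ℂ → ℂ := fun z => P.eval z / Q.eval z with hfdef
  have hfpos0 : ∀ ω : ℝ, 0 < (f ((ω:ℂ) * I)).re := by
    intro ω
    have := hpos ω
    rw [evalI, evalI, haev p, haev q] at this
    exact this
  have hmn : p.natDegree ≤ n := hqdeg ▸ natDegree_le_natDegree hdeg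
  have hPdeg : P.natDegree = p.natDegree := natDegree_map_eq_of_injective hmapinj p
  have hQdeg2 : Q.natDegree = n := by
    rw [natDegree_map_eq_of_injective hmapinj q, hqdeg]
  by_cases hn0 : n = 0
  · subst hn0
    have hpdeg0 : p.natDegree = 0 := le_antisymm hmn (Nat.zero_le _)
    have hc := Polynomial.eq_C_of_natDegree_eq_zero hpdeg0
    have hc0 : p.coeff 0 ≠ 0 := fun h => hp0 (by rw [hc, h, map_zero])
    refine ⟨fun z hz => absurd ?_ hc0, Or.inr hpdeg0⟩
    rw [hc, aeval_C] at hz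
    exact hmapinj (by simpa using hz)
  -- main branch
  have hn1 : 1 ≤ n := Nat.one_le_iff_ne_zero.mpr hn0
  -- boundedness of f on the closed right half plane
  obtain ⟨C₁, hC₁0, hC₁⟩ := norm_eval_le_aux P n (by rw [hPdeg]; exact hmn)
  obtain ⟨r₀, hr₀1, hr₀⟩ := norm_eval_ge_aux Q (by omega)
  have hKc : IsCompact (closedBall (0:ℂ) r₀ ∩ {z | 0 ≤ z.re}) :=
    (isCompact_closedBall _ _).inter_right (isClosed_le continuous_const continuous_re)
  have hcont0 : ContinuousOn f (closedBall (0:ℂ) r₀ ∩ {z | 0 ≤ z.re}) :=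
    (P.continuous_aeval.continuousOn.div Q.continuous_aeval.continuousOn
      (fun z hz => hQne z hz.2))
  obtain ⟨M₀, hM₀⟩ := hKc.exists_bound_of_continuousOn hcont0
  have hbpos : (0:ℝ) < ‖Q.leadingCoeff‖ := norm_pos_iff.mpr (leadingCoeff_ne_zero.mpr hQ0)
  set M : ℝ := max M₀ (C₁ / (‖Q.leadingCoeff‖ / 2)) with hMdef
  have hbdd : ∀ z : ℂ, 0 ≤ z.re → ‖f z‖ ≤ M := by
    intro z hz
    rcases le_or_gt ‖z‖ r₀ with h | h
    · exact le_trans (hM₀ z ⟨mem_closedBall_zero_iff.mpr h, hz⟩) (le_max_left _ _)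
    · refine le_trans ?_ (le_max_right _ _)
      have hQlb := hr₀ z h.le
      have hnum := hC₁ z (le_trans hr₀1 h.le)
      have hzpos : (0:ℝ) < ‖z‖ := by linarith
      have hdpos : (0:ℝ) < (‖Q.leadingCoeff‖ / 2) * ‖z‖ ^ Q.natDegree :=
        mul_pos (by linarith) (pow_pos hzpos _)
      rw [hfdef, norm_div]
      calc ‖P.eval z‖ / ‖Q.eval z‖
          ≤ (C₁ * ‖z‖ ^ n) / ((‖Q.leadingCoeff‖ / 2) * ‖z‖ ^ Q.natDegree) :=
            div_le_div₀ (by positivity) hnum hdpos hQlb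
        _ = C₁ / (‖Q.leadingCoeff‖ / 2) := by
            rw [hQdeg2]
            exact mul_div_mul_right _ _ (pow_ne_zero _ (ne_of_gt hzpos))
  -- Phragmen-Lindelof: Re f >= 0 on the closed right half plane
  have hfd : DifferentiableOn ℂ f {z : ℂ | 0 < z.re} :=
    (P.differentiable.differentiableOn).div (Q.differentiable.differentiableOn)
      (fun z hz => hQne z (le_of_lt (by exact hz)))
  have hclsub : closure {z : ℂ | 0 < z.re} ⊆ {z : ℂ | 0 ≤ z.re} :=
    closure_minimal (fun z hz => (le_of_lt hz : (0:ℝ) ≤ z.re)) (isClosed_le continuous_const continuous_re)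
  have hfc : ContinuousOn f {z : ℂ | 0 ≤ z.re} :=
    P.continuous.continuousOn.div Q.continuous.continuousOn (fun z hz => hQne z hz)
  set g : ℂ → ℂ := fun z => Complex.exp (-f z) with hgdef
  have hgd : DiffContOnCl ℂ g {z : ℂ | 0 < z.re} :=
    ⟨(hfd.neg).cexp, (hfc.mono hclsub).neg.cexp⟩
  have hgnorm : ∀ z, ‖g z‖ = Real.exp (-(f z).re) := fun z => by
    rw [hgdef]
    simp only [Complex.norm_exp, neg_re]
  have hrebdd : ∀ z : ℂ, 0 ≤ z.re → -(f z).re ≤ M := by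
    intro z hz
    have h1 := hbdd z hz
    have h2 : |(f z).re| ≤ ‖f z‖ := Complex.abs_re_le_norm _
    have := neg_abs_le (f z).re
    linarith
  have hPL : ∀ z : ℂ, 0 ≤ z.re → ‖g z‖ ≤ 1 := by
    intro z hz
    refine PhragmenLindelof.right_half_plane_of_bounded_on_real hgd ?_ ?_ ?_ hz
    · refine ⟨1, one_lt_two, 0, ?_⟩
      rw [Asymptotics.isBigO_iff]
      refine ⟨Real.exp M, ?_⟩
      rw [eventually_inf_principal]
      refine Eventually.of_forall fun w hw => ?_
      rw [hgnorm]
      have h1 : Real.exp (-(f w).re) ≤ Real.exp M :=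
        Real.exp_le_exp.mpr (hrebdd w (le_of_lt hw))
      have h2 : ‖Real.exp (0 * ‖w‖ ^ (1:ℝ))‖ = 1 := by
        simp
      rw [h2, mul_one]
      exact h1
    · refine isBoundedUnder_of_eventually_le (a := Real.exp M) ?_
      filter_upwards [eventually_ge_atTop (0:ℝ)] with x hx
      rw [hgnorm]
      exact Real.exp_le_exp.mpr (hrebdd _ (by simpa using hx))
    · intro x
      rw [hgnorm]
      have := hfpos0 x
      calc Real.exp (-(f ((x:ℂ) * I)).re) ≤ Real.exp 0 := Real.exp_le_exp.mpr (by linarith)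
        _ = 1 := Real.exp_zero
  have hreNonneg : ∀ z : ℂ, 0 ≤ z.re → 0 ≤ (f z).re := by
    intro z hz
    have := hPL z hz
    rw [hgnorm] at this
    have := Real.exp_le_one_iff.mp this
    linarith
  have hf00 : 0 < (f 0).re := by
    have := hfpos0 0
    simpa using this
  have hrePos : ∀ z : ℂ, 0 < z.re → 0 < (f z).re := by
    intro z hz
    rcases (hreNonneg z hz.le).lt_or_eq with h | h
    · exact h
    · exfalso
      have hgz1 : ‖g z‖ = 1 := by
        rw [hgnorm, ← h, neg_zero, Real.exp_zero]
      have hmax : IsMaxOn (norm ∘ g) {z : ℂ | 0 < z.re} z := by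
        intro w hw
        simp only [comp_apply, hgz1]
        exact hPL w (le_of_lt hw)
      have heq := Complex.eqOn_closure_of_isPreconnected_of_isMaxOn_norm
        (convex_halfSpace_re_gt (0:ℝ)).isPreconnected
        (isOpen_lt continuous_const continuous_re) hgd hz hmax
      have h0cl : (0:ℂ) ∈ closure {z : ℂ | 0 < z.re} := by
        have htend : Tendsto (fun t : ℝ => (t:ℂ)) (𝓝[>] 0) (𝓝 0) := by
          simpa using (Complex.continuous_ofReal.tendsto 0).mono_left nhdsWithin_le_nhds
        refine mem_closure_of_tendsto htend ?_
        filter_upwards [self_mem_nhdsWithin] with t ht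
        simpa using ht
      have hg0 : g 0 = g z := heq h0cl
      have h1 : ‖g 0‖ = 1 := by rw [hg0, hgz1]
      rw [hgnorm] at h1
      have h2 : -(f 0).re = 0 := by simpa using h1
      linarith
  -- Hurwitz stability of p
  have hHp : HurwitzStable p := by
    intro z hz
    by_contra h
    push_neg at h
    have hfz0 : P.eval z = 0 := by rw [← haev]; exact hz
    rcases h.lt_or_eq with h' | h'
    · have := hrePos z h'
      rw [hfdef] at this
      simp only [hfz0, zero_div, Complex.zero_re] at this
      exact lt_irrefl 0 this
    · have hz' : z = ((z.im : ℝ) : ℂ) * I := by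
        apply Complex.ext <;> simp [← h']
      have := hfpos0 z.im
      rw [← hz', hfdef] at this
      simp only [hfz0, zero_div, Complex.zero_re] at this
      exact lt_irrefl 0 this
  refine ⟨hHp, ?_⟩
  by_contra hcon
  push_neg at hcon
  obtain ⟨hne1, hne2⟩ := hcon
  set m := p.natDegree with hmdef
  have hk2 : m + 2 ≤ n := by omega
  set k : ℕ := n - m with hkdef
  have hkk : 2 ≤ k := by omega
  -- signs of leading coefficients
  have hsp := hurwitz_sign p hp0 hHp
  have hsq := hurwitz_sign q hq0 hq
  have he0 : 0 < p.eval 0 * q.eval 0 := by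
    have h := hpos 0
    have e1 : evalI p 0 = ((p.eval 0 : ℝ) : ℂ) := by
      rw [evalI]
      simp only [ofReal_zero, zero_mul]
      rw [show ((0:ℂ)) = algebraMap ℝ ℂ 0 by simp, aeval_algebraMap_apply_eq_algebraMap_eval]
      simp
    have e2 : evalI q 0 = ((q.eval 0 : ℝ) : ℂ) := by
      rw [evalI]
      simp only [ofReal_zero, zero_mul]
      rw [show ((0:ℂ)) = algebraMap ℝ ℂ 0 by simp, aeval_algebraMap_apply_eq_algebraMap_eval]
      simp
    rw [e1, e2, ← ofReal_div, ofReal_re] at h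
    exact (div_pos_iff.mp h).elim (fun h => mul_pos h.1 h.2)
      (fun h => mul_pos_of_neg_of_neg h.1 h.2)
  have hab : 0 < p.leadingCoeff * q.leadingCoeff := by nlinarith
  -- the ray
  set θ : ℝ := 3 * Real.pi / (4 * k) with hθdef
  have hπ := Real.pi_pos
  have hkR : (0:ℝ) < (k:ℝ) := by positivity
  have hθpos : 0 < θ := by positivity
  have hθlt : θ < Real.pi / 2 := by
    rw [hθdef, div_lt_div_iff₀ (by positivity) (by norm_num)]
    have : (2:ℝ) ≤ (k:ℝ) := by exact_mod_cast hkk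
    nlinarith
  have hkθ : (k:ℝ) * θ = 3 * Real.pi / 4 := by
    rw [hθdef]
    field_simp
  have hcosθ : 0 < Real.cos θ := Real.cos_pos_of_mem_Ioo ⟨by linarith, hθlt⟩
  have hcoskθ : Real.cos ((k:ℝ) * θ) < 0 := by
    rw [hkθ]
    apply Real.cos_neg_of_pi_div_two_lt_of_lt <;> nlinarith
  set zf : ℝ → ℂ := fun R => (R:ℂ) * Complex.exp ((θ:ℂ) * I) with hzfdef
  have hexpnorm : ‖Complex.exp ((θ:ℂ) * I)‖ = 1 := by
    rw [Complex.norm_exp]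
    simp
  have hznorm : ∀ R : ℝ, 0 ≤ R → ‖zf R‖ = R := by
    intro R hR
    rw [hzfdef]
    simp only [norm_mul, hexpnorm, mul_one, Complex.norm_real, Real.norm_eq_abs]
    exact abs_of_nonneg hR
  have hztends : Tendsto (fun R => ‖zf R‖) atTop atTop := by
    refine Tendsto.congr' ?_ tendsto_id
    filter_upwards [eventually_ge_atTop (0:ℝ)] with R hR
    exact (hznorm R hR).symm
  have hzre : ∀ R : ℝ, 0 < R → 0 < (zf R).re := by
    intro R hR
    rw [hzfdef]
    simp only [re_ofReal_mul]
    rw [show ((θ:ℂ) * I) = ((θ:ℝ):ℂ) * I from rfl, Complex.exp_ofReal_mul_I_re]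
    exact mul_pos hR hcosθ
  -- leading coefficients over ℂ
  set a : ℂ := P.leadingCoeff with hadef
  set b : ℂ := Q.leadingCoeff with hbdef
  have hb0 : b ≠ 0 := leadingCoeff_ne_zero.mpr hQ0
  have ha0 : a ≠ 0 := leadingCoeff_ne_zero.mpr hP0
  have haval : a = ((p.leadingCoeff : ℝ) : ℂ) := by
    rw [hadef, Polynomial.leadingCoeff, hPdeg, hPdef, Polynomial.coeff_map]
    rfl
  have hbval : b = ((q.leadingCoeff : ℝ) : ℂ) := by
    rw [hbdef, Polynomial.leadingCoeff, hQdeg2, ← hqdeg, hQdef, Polynomial.coeff_map]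
    rfl
  have hXkP : (X ^ k * P).natDegree = n := by
    rw [natDegree_mul (pow_ne_zero _ X_ne_zero) hP0, natDegree_X_pow, hPdeg]
    omega
  have hXkPlead : (X ^ k * P).leadingCoeff = a := by
    rw [leadingCoeff_mul, leadingCoeff_X_pow, one_mul]
  set D : ℂ[X] := C b * (X ^ k * P) - C a * Q with hDdef
  have e1 : (X ^ k * P).coeff n = a := by rw [← hXkP, coeff_natDegree, hXkPlead]
  have e2 : Q.coeff n = b := by rw [← hQdeg2, coeff_natDegree]
  have hDcoeff : D.coeff n = 0 := by
    rw [hDdef, coeff_sub, coeff_C_mul, coeff_C_mul, e1, e2]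
    ring
  have hDdeg : D.natDegree < n := by
    have h1 : D.natDegree ≤ n := by
      refine le_trans (natDegree_sub_le _ _) (max_le ?_ ?_)
      · exact le_trans (natDegree_C_mul_le _ _) hXkP.le
      · exact le_trans (natDegree_C_mul_le _ _) hQdeg2.le
    rcases eq_or_ne D 0 with h | h
    · rw [h, natDegree_zero]; omega
    · rcases h1.lt_or_eq with h' | h'
      · exact h'
      · exfalso
        have := D.coeff_natDegree
        rw [h', hDcoeff] at this
        exact h (leadingCoeff_eq_zero.mp this.symm)
  have hDiv := tendsto_eval_div_aux D Q (by rw [hQdeg2]; exact hDdeg) zf hztends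
  have hgy : (fun R => (X ^ k * P).eval (zf R) / Q.eval (zf R))
      =ᶠ[atTop] (fun R => D.eval (zf R) / Q.eval (zf R) * b⁻¹ + a / b) := by
    filter_upwards [eventually_gt_atTop (0:ℝ)] with R hR
    have hQz : Q.eval (zf R) ≠ 0 := hQne _ (hzre R hR).le
    rw [hDdef]
    simp only [eval_sub, eval_mul, eval_C]
    field_simp
    ring
  have hgt : Tendsto (fun R => (X ^ k * P).eval (zf R) / Q.eval (zf R)) atTop (𝓝 (a / b)) := by
    have h1 : Tendsto (fun R => D.eval (zf R) / Q.eval (zf R) * b⁻¹ + a / b) atTop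
        (𝓝 (0 * b⁻¹ + a / b)) := (hDiv.mul_const _).add_const _
    rw [zero_mul, zero_add] at h1
    exact Filter.Tendsto.congr' hgy.symm h1
  set w : ℂ := (Complex.exp ((θ:ℂ) * I))⁻¹ ^ k with hwdef
  have hwre : w.re = Real.cos ((k:ℝ) * θ) := by
    rw [hwdef, ← Complex.exp_neg, ← Complex.exp_nat_mul]
    rw [show ((k:ℕ):ℂ) * -((θ:ℂ) * I) = ((-((k:ℝ) * θ) : ℝ) : ℂ) * I by push_cast; ring]
    rw [Complex.exp_ofReal_mul_I_re, Real.cos_neg]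
  have hwlim : Tendsto (fun R => (w * ((X ^ k * P).eval (zf R) / Q.eval (zf R))).re)
      atTop (𝓝 ((w * (a / b)).re)) :=
    (Complex.continuous_re.tendsto _).comp (hgt.const_mul w)
  have htarget : (w * (a / b)).re < 0 := by
    have hc : a / b = (((p.leadingCoeff / q.leadingCoeff : ℝ)) : ℂ) := by
      rw [haval, hbval, ofReal_div]
    rw [hc, mul_comm, re_ofReal_mul, hwre]
    have hcpos : 0 < p.leadingCoeff / q.leadingCoeff := by
      rcases mul_pos_iff.mp hab with h | h
      · exact div_pos h.1 h.2
      · exact div_pos_of_neg_of_neg h.1 h.2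
    exact mul_neg_of_pos_of_neg hcpos hcoskθ
  have hev : ∀ᶠ R in atTop, (w * ((X ^ k * P).eval (zf R) / Q.eval (zf R))).re < 0 :=
    hwlim.eventually_lt_const htarget
  obtain ⟨R, hRlt, hR0⟩ := (hev.and (eventually_gt_atTop (0:ℝ))).exists
  -- identify the expression with R^k * (f (zf R)).re
  have hexpne : Complex.exp ((θ:ℂ) * I) ≠ 0 := Complex.exp_ne_zero _
  have hkey : w * ((X ^ k * P).eval (zf R) / Q.eval (zf R))
      = ((R ^ k : ℝ) : ℂ) * f (zf R) := by
    rw [eval_mul, eval_pow, eval_X, hfdef]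
    have : w * (zf R ^ k * P.eval (zf R) / Q.eval (zf R))
        = (w * zf R ^ k) * (P.eval (zf R) / Q.eval (zf R)) := by ring
    rw [this]
    congr 1
    rw [hwdef, hzfdef, ← mul_pow]
    rw [show (Complex.exp ((θ:ℂ) * I))⁻¹ * ((R:ℂ) * Complex.exp ((θ:ℂ) * I)) = (R:ℂ) by
      field_simp]
    rw [ofReal_pow]
  rw [hkey, re_ofReal_mul] at hRlt
  have hfpos : 0 < (f (zf R)).re := hrePos _ (hzre R hR0)
  have hRk : (0:ℝ) < R ^ k := pow_pos hR0 _
  nlinarith
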